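/- Let k, n ∈ ℕ with 1 ≤ k ≤ n, let s_1,…,s_n ∈ (0,1] with ∑_i s_i ≤ k, let c ≥ 0, and define p_i = min(s_i + c, 1), assuming ∑_{i=1}^n p_i = k. Then for every vector q ∈ [0,1]^n satisfying ∑_{i=1}^n q_i ≤ k and |q_i − q_j| ≤ |s_i − s_j| for all i, j, one has min_{i} (q_i/s_i) ≤ min_{i} (p_i/s_i). That is, the upward water-filling solution maximizes the max–min (ratio) utility among all fairness-preserving marginal selection probability vectors. -/
import Mathlib


/-- Optimality of upward water-filling for max–min (ratio) utility: if `∑ s ≤ k`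
and `p i = min (s i + c) 1` sums to `k`, then `p` maximizes `⨅ i, q i / s i` over
all fairness-preserving marginal vectors `q ∈ [0,1]^n` with `∑ q ≤ k`. -/
theorem waterfill_up_optimal_ratio (k n : ℕ) (hk : 1 ≤ k) (hkn : k ≤ n)
    (s : Fin n → ℝ) (hs : ∀ i, 0 < s i ∧ s i ≤ 1) (hsum : ∑ i, s i ≤ k)
    (c : ℝ) (hc : 0 ≤ c) (p : Fin n → ℝ) (hp : ∀ i, p i = min (s i + c) 1)
    (hpk : ∑ i, p i = k) :
    ∀ q : Fin n → ℝ, (∀ i, 0 ≤ q i ∧ q i ≤ 1) → (∑ i, q i ≤ k) →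
      (∀ i j, |q i - q j| ≤ |s i - s j|) →
      (⨅ i, q i / s i) ≤ ⨅ i, p i / s i := by
  intro q hq hqk hfair
  have hn : 0 < n := lt_of_lt_of_le hk hkn
  haveI : Nonempty (Fin n) := Fin.pos_iff_nonempty.mp hn
  obtain ⟨i0, -, hmax⟩ := Finset.exists_max_image (Finset.univ : Finset (Fin n)) s
    ⟨Classical.arbitrary _, Finset.mem_univ _⟩
  set r := p i0 / s i0 with hr
  have hs0 := (hs i0).1
  -- r is a lower bound for all ratios p j / s j
  have hrle : ∀ j, r ≤ p j / s j := by
    intro j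
    have hsj := (hs j).1
    rw [hr, div_le_div_iff₀ hs0 hsj, hp, hp]
    have hji : s j ≤ s i0 := hmax j (Finset.mem_univ j)
    rcases le_or_gt (s j + c) 1 with h1 | h1
    · rw [min_eq_left h1]
      have h2 : min (s i0 + c) 1 ≤ s i0 + c := min_le_left _ _
      nlinarith
    · rw [min_eq_right h1.le]
      have h2 : min (s i0 + c) 1 ≤ 1 := min_le_right _ _
      nlinarith
  -- there exists i with q i / s i ≤ r
  have hexists : ∃ i, q i / s i ≤ r := by
    by_contra hcon
    push_neg at hcon
    have hq' : ∀ i, r * s i < q i := by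
      intro i
      have := hcon i
      rwa [lt_div_iff₀ (hs i).1] at this
    have hrs : r * s i0 = p i0 := by
      rw [hr, div_mul_cancel₀]
      exact ne_of_gt hs0
    rcases le_or_gt 1 (s i0 + c) with h1 | h1
    · have hp0 : p i0 = 1 := by rw [hp, min_eq_right h1]
      have : (1 : ℝ) < q i0 := by
        have := hq' i0
        rw [hrs, hp0] at this
        exact this
      exact absurd (hq i0).2 (not_le.mpr this)
    · have hp0 : p i0 = s i0 + c := by rw [hp, min_eq_left h1.le]
      have hqi : ∀ i ∈ Finset.univ, p i < q i := by
        intro i _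
        have hji : s i ≤ s i0 := hmax i (Finset.mem_univ i)
        have habs : q i0 - q i ≤ s i0 - s i := by
          have h2 := (abs_le.mp (hfair i0 i)).2
          have h3 : |s i0 - s i| = s i0 - s i := abs_of_nonneg (by linarith)
          calc q i0 - q i ≤ |q i0 - q i| := le_abs_self _
            _ ≤ |s i0 - s i| := hfair i0 i
            _ = s i0 - s i := h3
        have hq0 : s i0 + c < q i0 := by
          have := hq' i0; rw [hrs, hp0] at this; exact this
        have hpile : p i ≤ s i + c := by rw [hp]; exact min_le_left _ _
        linarith
      have : ∑ i, p i < ∑ i, q i :=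
        Finset.sum_lt_sum_of_nonempty Finset.univ_nonempty hqi
      linarith
  obtain ⟨i, hi⟩ := hexists
  have h1 : (⨅ i, q i / s i) ≤ q i / s i :=
    ciInf_le (Set.Finite.bddBelow (Set.finite_range _)) i
  have h2 : r ≤ ⨅ j, p j / s j := le_ciInf hrle
  linarith
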